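/- For each directed cycle γ of length k on vertices of [n] (distinct vertices i_1,…,i_k, with edges (i_j, i_{j+1}) for j ∈ [k], indices mod k), the matrix μ(γ) assigning weight 1/k to each edge of γ and 0 elsewhere is an occupation measure, and it is an extreme point of the convex set Ω(n) of occupation measures. Conversely, every extreme point of Ω(n) is of this form. -/

import Mathlib

open Classical

/-- The set `Ω(n)` of occupation measures. -/
def Omega (n : ℕ) : Set (Matrix (Fin n) (Fin n) ℝ) :=
  {μ | (∀ i j, 0 ≤ μ i j) ∧ (∑ i, ∑ j, μ i j = 1) ∧ ∀ i, ∑ j, μ i j = ∑ j, μ j i}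

/-- The occupation measure `μ(γ)` of a directed cycle `γ` with (distinct) vertices
`f 0, …, f k`: each edge of the cycle gets weight `1/(k+1)`. -/
noncomputable def cycleMeasure (n k : ℕ) (f : Fin (k + 1) → Fin n) :
    Matrix (Fin n) (Fin n) ℝ :=
  Matrix.of fun a b =>
    if ∃ j : Fin (k + 1), f j = a ∧ f (j + 1) = b then (1 : ℝ) / (k + 1) else 0

open Fin.NatCast in
lemma eq_cycleMeasure_of_support {n k : ℕ} {f : Fin (k+1) → Fin n}
    (hf : Function.Injective f) {x : Matrix (Fin n) (Fin n) ℝ} (hx : x ∈ Omega n)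
    (hsupp : ∀ a b, x a b ≠ 0 → ∃ j, f j = a ∧ f (j+1) = b) :
    x = cycleMeasure n k f := by
  obtain ⟨hpos, hsum, hbal⟩ := hx
  have step1 : ∀ i : Fin (k+1), ∑ b, x (f i) b = x (f i) (f (i+1)) := by
    intro i
    refine Finset.sum_eq_single (f (i+1)) ?_ (by simp)
    intro b _ hb
    by_contra h
    obtain ⟨j, hj1, hj2⟩ := hsupp _ _ h
    exact hb (by rw [← hj2, hf hj1])
  have step2 : ∀ i : Fin (k+1), ∑ b, x b (f i) = x (f (i-1)) (f i) := by
    intro i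
    refine Finset.sum_eq_single (f (i-1)) ?_ (by simp)
    intro b _ hb
    by_contra h
    obtain ⟨j, hj1, hj2⟩ := hsupp _ _ h
    have hji : j = i - 1 := by
      have h2 := hf hj2
      exact eq_sub_of_add_eq h2
    exact hb (by rw [← hj1, hji])
  have step3 : ∀ i : Fin (k+1), x (f (i+1)) (f (i+1+1)) = x (f i) (f (i+1)) := by
    intro i
    have h := hbal (f (i+1))
    rw [step1, step2] at h
    rw [h, add_sub_cancel_right]
  have step4 : ∀ i : Fin (k+1), x (f i) (f (i+1)) = x (f 0) (f (0+1)) := by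
    have key : ∀ m : ℕ, x (f (m : Fin (k+1))) (f ((m : Fin (k+1)) + 1)) = x (f 0) (f (0+1)) := by
      intro m
      induction m with
      | zero => norm_num
      | succ m ih =>
        have hc : ((m+1 : ℕ) : Fin (k+1)) = (m : Fin (k+1)) + 1 := by push_cast; ring
        rw [hc, step3, ih]
    intro i
    have h := key i.val
    simpa [Fin.cast_val_eq_self] using h
  set c0 := x (f 0) (f (0+1)) with hc0
  have step5 : ∀ a, ∑ b, x a b = ∑ i : Fin (k+1), if f i = a then c0 else 0 := by
    intro a
    by_cases ha : ∃ i, f i = a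
    · obtain ⟨i0, hi0⟩ := ha
      rw [← hi0, step1 i0, step4 i0]
      rw [Finset.sum_eq_single i0]
      · simp
      · intro i _ hi
        rw [if_neg fun h => hi (hf h)]
      · simp
    · have h1 : ∀ b, x a b = 0 := by
        intro b
        by_contra h
        obtain ⟨j, hj, -⟩ := hsupp _ _ h
        exact ha ⟨j, hj⟩
      rw [Finset.sum_eq_zero fun b _ => h1 b]
      symm
      refine Finset.sum_eq_zero fun i _ => ?_
      rw [if_neg fun h => ha ⟨i, h⟩]
  have step6 : c0 = 1 / (k+1) := by
    have h1 : (1:ℝ) = ∑ a, ∑ i : Fin (k+1), if f i = a then c0 else 0 := by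
      rw [← hsum]
      exact Finset.sum_congr rfl fun a _ => step5 a
    rw [Finset.sum_comm] at h1
    simp only [Finset.sum_ite_eq, Finset.mem_univ, if_true] at h1
    rw [Finset.sum_const, Finset.card_univ, Fintype.card_fin] at h1
    have hk1 : ((k:ℝ)+1) ≠ 0 := by positivity
    rw [nsmul_eq_mul] at h1
    push_cast at h1
    field_simp
    linarith
  funext a b
  show x a b = Matrix.of _ a b
  rw [Matrix.of_apply]
  split_ifs with h
  · obtain ⟨j, hj1, hj2⟩ := h
    rw [← hj1, ← hj2, step4 j]
    exact step6
  · by_contra hne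
    exact h (hsupp a b hne)

lemma cycleMeasure_row_sum {n k : ℕ} {f : Fin (k+1) → Fin n} (hf : Function.Injective f)
    (a : Fin n) :
    ∑ b, cycleMeasure n k f a b = ∑ i : Fin (k+1), if f i = a then (1:ℝ)/(k+1) else 0 := by
  by_cases ha : ∃ i, f i = a
  · obtain ⟨i0, hi0⟩ := ha
    have h1 : ∑ b, cycleMeasure n k f (f i0) b = (1:ℝ)/(k+1) := by
      refine (Finset.sum_eq_single (f (i0+1)) ?_ (by simp)).trans ?_
      · intro b _ hb
        show (Matrix.of _ : Matrix (Fin n) (Fin n) ℝ) _ _ = 0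
        rw [Matrix.of_apply, if_neg]
        rintro ⟨j, hj1, hj2⟩
        exact hb (by rw [← hj2, hf hj1])
      · show (Matrix.of _ : Matrix (Fin n) (Fin n) ℝ) _ _ = _
        rw [Matrix.of_apply, if_pos ⟨i0, rfl, rfl⟩]
    rw [← hi0, h1]
    rw [Finset.sum_eq_single i0]
    · simp
    · intro i _ hi
      rw [if_neg fun h => hi (hf h)]
    · simp
  · have h1 : ∀ b, cycleMeasure n k f a b = 0 := by
      intro b
      show (Matrix.of _ : Matrix (Fin n) (Fin n) ℝ) _ _ = 0
      rw [Matrix.of_apply, if_neg]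
      rintro ⟨j, hj1, -⟩
      exact ha ⟨j, hj1⟩
    rw [Finset.sum_eq_zero fun b _ => h1 b]
    symm
    exact Finset.sum_eq_zero fun i _ => by rw [if_neg fun h => ha ⟨i, h⟩]

lemma cycleMeasure_col_sum {n k : ℕ} {f : Fin (k+1) → Fin n} (hf : Function.Injective f)
    (a : Fin n) :
    ∑ b, cycleMeasure n k f b a = ∑ i : Fin (k+1), if f i = a then (1:ℝ)/(k+1) else 0 := by
  by_cases ha : ∃ i, f i = a
  · obtain ⟨i0, hi0⟩ := ha
    have h1 : ∑ b, cycleMeasure n k f b (f i0) = (1:ℝ)/(k+1) := by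
      refine (Finset.sum_eq_single (f (i0-1)) ?_ (by simp)).trans ?_
      · intro b _ hb
        show (Matrix.of _ : Matrix (Fin n) (Fin n) ℝ) _ _ = 0
        rw [Matrix.of_apply, if_neg]
        rintro ⟨j, hj1, hj2⟩
        exact hb (by rw [← hj1, eq_sub_of_add_eq (hf hj2)])
      · show (Matrix.of _ : Matrix (Fin n) (Fin n) ℝ) _ _ = _
        rw [Matrix.of_apply, if_pos ⟨i0 - 1, rfl, by rw [sub_add_cancel]⟩]
    rw [← hi0, h1]
    rw [Finset.sum_eq_single i0]
    · simp
    · intro i _ hi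
      rw [if_neg fun h => hi (hf h)]
    · simp
  · have h1 : ∀ b, cycleMeasure n k f b a = 0 := by
      intro b
      show (Matrix.of _ : Matrix (Fin n) (Fin n) ℝ) _ _ = 0
      rw [Matrix.of_apply, if_neg]
      rintro ⟨j, -, hj2⟩
      exact ha ⟨j + 1, hj2⟩
    rw [Finset.sum_eq_zero fun b _ => h1 b]
    symm
    exact Finset.sum_eq_zero fun i _ => by rw [if_neg fun h => ha ⟨i, h⟩]

lemma cycleMeasure_mem_Omega {n k : ℕ} {f : Fin (k+1) → Fin n} (hf : Function.Injective f) :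
    cycleMeasure n k f ∈ Omega n := by
  refine ⟨?_, ?_, ?_⟩
  · intro i j
    show 0 ≤ (Matrix.of _ : Matrix (Fin n) (Fin n) ℝ) _ _
    rw [Matrix.of_apply]
    split_ifs
    · positivity
    · exact le_rfl
  · rw [Finset.sum_congr rfl fun a _ => cycleMeasure_row_sum hf a, Finset.sum_comm]
    simp only [Finset.sum_ite_eq, Finset.mem_univ, if_true]
    rw [Finset.sum_const, Finset.card_univ, Fintype.card_fin, nsmul_eq_mul]
    have hk1 : ((k:ℝ)+1) ≠ 0 := by positivity
    push_cast
    field_simp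
  · intro i
    rw [cycleMeasure_row_sum hf i, cycleMeasure_col_sum hf i]

lemma cycleMeasure_extreme {n k : ℕ} {f : Fin (k+1) → Fin n} (hf : Function.Injective f) :
    cycleMeasure n k f ∈ Set.extremePoints ℝ (Omega n) := by
  rw [mem_extremePoints]
  refine ⟨cycleMeasure_mem_Omega hf, ?_⟩
  intro x hx y hy hseg
  obtain ⟨a, b, ha, hb, hab, hsum⟩ := hseg
  have key : ∀ (z : Matrix (Fin n) (Fin n) ℝ), z ∈ Omega n →
      (∀ p q, a • x p q + b • y p q = cycleMeasure n k f p q) → z = x ∨ z = y → z = cycleMeasure n k f := by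
    intro z hz hpt hzc
    refine eq_cycleMeasure_of_support hf hz ?_
    intro p q hne
    by_contra hno
    have h0 : cycleMeasure n k f p q = 0 := by
      show (Matrix.of _ : Matrix (Fin n) (Fin n) ℝ) _ _ = 0
      rw [Matrix.of_apply, if_neg hno]
    have h1 := hpt p q
    rw [h0] at h1
    have hx0 := hx.1 p q
    have hy0 := hy.1 p q
    simp only [smul_eq_mul] at h1
    rcases hzc with rfl | rfl
    · have : z p q = 0 := by nlinarith [mul_nonneg ha.le hx0, mul_nonneg hb.le hy0, mul_pos ha (lt_of_le_of_ne hx0 (Ne.symm hne))]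
      exact hne this
    · have : z p q = 0 := by nlinarith [mul_nonneg ha.le hx0, mul_nonneg hb.le hy0, mul_pos hb (lt_of_le_of_ne hy0 (Ne.symm hne))]
      exact hne this
  have hpt : ∀ p q, a • x p q + b • y p q = cycleMeasure n k f p q := by
    intro p q
    have := congrFun (congrFun hsum p) q
    simpa [Matrix.add_apply, Matrix.smul_apply] using this
  exact ⟨key x hx hpt (Or.inl rfl), key y hy hpt (Or.inr rfl)⟩

/-- For every directed cycle `γ` (distinct vertices), `μ(γ)` is an
occupation measure and an extreme point of `Ω(n)`; conversely, every extreme point of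
`Ω(n)` is of this form. -/
theorem extreme_points_of_occupation_measures (n : ℕ) :
    (∀ (k : ℕ) (f : Fin (k + 1) → Fin n), Function.Injective f →
      cycleMeasure n k f ∈ Omega n ∧
      cycleMeasure n k f ∈ Set.extremePoints ℝ (Omega n)) ∧
    (∀ μ ∈ Set.extremePoints ℝ (Omega n),
      ∃ (k : ℕ) (f : Fin (k + 1) → Fin n), Function.Injective f ∧
        μ = cycleMeasure n k f) := by
  constructor
  · intro k f hf
    exact ⟨cycleMeasure_mem_Omega hf, cycleMeasure_extreme hf⟩
  · intro μ hμext
    rw [mem_extremePoints] at hμext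
    obtain ⟨hμ, hext⟩ := hμext
    obtain ⟨hpos, hsum, hbal⟩ := hμ
    -- there is a positive entry
    have hexists : ∃ i j, 0 < μ i j := by
      by_contra h
      push_neg at h
      have hz : ∑ i, ∑ j, μ i j = 0 :=
        Finset.sum_eq_zero fun i _ => Finset.sum_eq_zero fun j _ =>
          le_antisymm (h i j) (hpos i j)
      rw [hz] at hsum
      norm_num at hsum
    obtain ⟨i0, j0, hij0⟩ := hexists
    -- every vertex with positive out-mass has a successor with positive out-mass
    have hstep : ∀ s : {i : Fin n // 0 < ∑ j, μ i j},
        ∃ t : {i : Fin n // 0 < ∑ j, μ i j}, 0 < μ s.1 t.1 := by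
      rintro ⟨i, hi⟩
      have h0 : ∑ j : Fin n, (0:ℝ) < ∑ j, μ i j := by simpa using hi
      obtain ⟨j, -, hj⟩ := Finset.exists_lt_of_sum_lt h0
      refine ⟨⟨j, ?_⟩, hj⟩
      rw [hbal j]
      exact lt_of_lt_of_le hj (Finset.single_le_sum (fun b _ => hpos b j) (Finset.mem_univ i))
    choose nxt hnxt using hstep
    have hP0 : 0 < ∑ j, μ i0 j :=
      lt_of_lt_of_le hij0 (Finset.single_le_sum (fun j _ => hpos i0 j) (Finset.mem_univ j0))
    set g : ℕ → {i : Fin n // 0 < ∑ j, μ i j} := fun m => nxt^[m] ⟨i0, hP0⟩ with hg_def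
    have hg : ∀ m, 0 < μ (g m).1 (g (m+1)).1 := by
      intro m
      have h1 : g (m+1) = nxt (g m) := Function.iterate_succ_apply' nxt m _
      rw [h1]
      exact hnxt (g m)
    -- pigeonhole: a repeat among g 0, ..., g n
    have hQ : ∃ q, ∃ p, p < q ∧ (g p).1 = (g q).1 := by
      have hni : ¬ Function.Injective (fun t : Fin (n+1) => (g t.val).1) := by
        intro hinj
        have := Fintype.card_le_of_injective _ hinj
        simp at this
      obtain ⟨t, s, hts, hne⟩ := Function.not_injective_iff.mp hni
      rcases lt_or_gt_of_ne hne with h | h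
      · exact ⟨s.val, t.val, h, hts⟩
      · exact ⟨t.val, s.val, h, hts.symm⟩
    set m2 := Nat.find hQ with hm2def
    obtain ⟨m1, hm12, heq⟩ := Nat.find_spec hQ
    have hinj : ∀ p q, p < q → q < m2 → (g p).1 ≠ (g q).1 := by
      intro p q hpq hq h
      exact Nat.find_min hQ hq ⟨p, hpq, h⟩
    set k := m2 - m1 - 1 with hkdef
    have hk : m1 + (k + 1) = m2 := by omega
    set f : Fin (k+1) → Fin n := fun t => (g (m1 + t.val)).1 with hfdef
    have hfinj : Function.Injective f := by
      intro t s h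
      have hsl := s.isLt
      have htl := t.isLt
      rcases lt_trichotomy t.val s.val with hts | hts | hts
      · exact absurd h (hinj _ _ (by omega) (by omega))
      · exact Fin.ext hts
      · exact absurd h.symm (hinj _ _ (by omega) (by omega))
    have hedge : ∀ t : Fin (k+1), 0 < μ (f t) (f (t+1)) := by
      intro t
      by_cases ht : t.val < k
      · have h1 : (t+1).val = t.val + 1 := by
          rw [Fin.val_add_one, if_neg]
          intro hlast
          rw [hlast] at ht
          simp [Fin.last] at ht
        show 0 < μ (g (m1 + t.val)).1 (g (m1 + (t+1).val)).1
        rw [h1, ← Nat.add_assoc]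
        exact hg (m1 + t.val)
      · have htk : t.val = k := by have := t.isLt; omega
        have h1 : t + 1 = 0 := by
          have hlast : t = Fin.last k := Fin.ext (by simpa using htk)
          rw [hlast, Fin.last_add_one]
        rw [h1]
        show 0 < μ (g (m1 + t.val)).1 (g (m1 + (0:Fin (k+1)).val)).1
        have h2 : (g (m1 + (0:Fin (k+1)).val)).1 = (g (m1 + t.val + 1)).1 := by
          rw [Fin.val_zero, Nat.add_zero, heq]
          congr 2
          omega
        rw [h2]
        exact hg (m1 + t.val)
    -- perturbation argument
    set ν := cycleMeasure n k f with hνdef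
    have hνΩ := cycleMeasure_mem_Omega hfinj
    obtain ⟨hνpos, hνsum, hνbal⟩ := hνΩ
    have hune : (Finset.univ : Finset (Fin (k+1))).Nonempty := ⟨0, Finset.mem_univ 0⟩
    set w := Finset.univ.inf' hune (fun t : Fin (k+1) => μ (f t) (f (t+1))) with hwdef
    have hw : 0 < w := by
      rw [Finset.lt_inf'_iff]
      exact fun t _ => hedge t
    set ε := min 1 (((k:ℝ)+1) * w) with hεdef
    have hε0 : 0 < ε := lt_min one_pos (by positivity)
    have hε1 : ε ≤ 1 := min_le_left _ _
    have hεm : ε * (1/((k:ℝ)+1)) ≤ w := by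
      have hk1 : (0:ℝ) < (k:ℝ)+1 := by positivity
      rw [mul_one_div, div_le_iff₀ hk1]
      calc ε ≤ ((k:ℝ)+1) * w := min_le_right _ _
        _ = w * ((k:ℝ)+1) := by ring
    have hνval : ∀ p q, ν p q = 0 ∨ (ν p q = 1/((k:ℝ)+1) ∧ w ≤ μ p q) := by
      intro p q
      have hform : ν p q = if ∃ j : Fin (k+1), f j = p ∧ f (j+1) = q then (1:ℝ)/(k+1) else 0 := rfl
      by_cases h : ∃ j : Fin (k+1), f j = p ∧ f (j+1) = q
      · right
        refine ⟨by rw [hform, if_pos h], ?_⟩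
        obtain ⟨j, hj1, hj2⟩ := h
        rw [← hj1, ← hj2]
        exact Finset.inf'_le _ (Finset.mem_univ j)
      · left
        rw [hform, if_neg h]
    set x := (1+ε) • μ - ε • ν with hxdef
    set y := (1-ε) • μ + ε • ν with hydef
    have hxent : ∀ p q, x p q = (1+ε) * μ p q - ε * ν p q := by
      intro p q
      rw [hxdef]
      simp [Matrix.sub_apply, Matrix.smul_apply, smul_eq_mul]
    have hyent : ∀ p q, y p q = (1-ε) * μ p q + ε * ν p q := by
      intro p q
      rw [hydef]
      simp [Matrix.add_apply, Matrix.smul_apply, smul_eq_mul]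
    have hxΩ : x ∈ Omega n := by
      refine ⟨?_, ?_, ?_⟩
      · intro p q
        rw [hxent]
        rcases hνval p q with h | ⟨h, hle⟩
        · rw [h]
          nlinarith [hpos p q, hε0.le]
        · rw [h]
          nlinarith [hpos p q, hε0.le, hεm]
      · simp only [hxent, Finset.sum_sub_distrib, ← Finset.mul_sum]
        rw [hsum, hνsum]
        ring
      · intro i
        simp only [hxent, Finset.sum_sub_distrib, ← Finset.mul_sum]
        rw [hbal i, hνbal i]
    have hyΩ : y ∈ Omega n := by
      refine ⟨?_, ?_, ?_⟩
      · intro p q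
        rw [hyent]
        have := hνpos p q
        nlinarith [hpos p q, hε0.le, hε1]
      · simp only [hyent, Finset.sum_add_distrib, ← Finset.mul_sum]
        rw [hsum, hνsum]
        ring
      · intro i
        simp only [hyent, Finset.sum_add_distrib, ← Finset.mul_sum]
        rw [hbal i, hνbal i]
    have hseg : μ ∈ openSegment ℝ x y := by
      refine ⟨1/2, 1/2, by norm_num, by norm_num, by norm_num, ?_⟩
      rw [hxdef, hydef]
      module
    obtain ⟨-, hy⟩ := hext x hxΩ y hyΩ hseg
    rw [hydef] at hy
    have h2 : ε • ν = ε • μ := by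
      calc ε • ν = ((1-ε) • μ + ε • ν) - (1-ε) • μ := by module
        _ = μ - (1-ε) • μ := by rw [hy]
        _ = ε • μ := by module
    have h3 : ν = μ := smul_right_injective (Matrix (Fin n) (Fin n) ℝ) hε0.ne' h2
    exact ⟨k, f, hfinj, h3.symm⟩
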